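/- arXiv:1408.6712 — 4 statements merged into one kernel-verified Lean document; each statement's English description precedes it below -/
import Mathlib

section
/- Let X be a metric space, ψ : X → ℝ upper semicontinuous and θ : X → ℝ lower semicontinuous with ψ(x) < θ(x) for all x. Then there exists a continuous function φ : X → ℝ with ψ(x) < φ(x) < θ(x) for all x. -/
/-- Baire insertion theorem: a continuous function can be inserted strictly between an
upper semicontinuous function and a larger lower semicontinuous function. -/
theorem baire_insertion {X : Type*} [MetricSpace X]
    (ψ θ : X → ℝ) (hψ : UpperSemicontinuous ψ) (hθ : LowerSemicontinuous θ)
    (hlt : ∀ x, ψ x < θ x) :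
    ∃ φ : X → ℝ, Continuous φ ∧ ∀ x, ψ x < φ x ∧ φ x < θ x := by
  set U : ℚ → Set X := fun q => {x | ψ x < (q : ℝ)} ∩ {x | (q : ℝ) < θ x} with hU
  have hUopen : ∀ q, IsOpen (U q) := fun q =>
    (hψ.isOpen_preimage _).inter (hθ.isOpen_preimage _)
  have hUcov : Set.univ ⊆ ⋃ q, U q := by
    intro x _
    obtain ⟨q, hq1, hq2⟩ := exists_rat_btwn (hlt x)
    exact Set.mem_iUnion.2 ⟨q, hq1, hq2⟩
  obtain ⟨ρ, hρ⟩ := PartitionOfUnity.exists_isSubordinate (s := Set.univ) isClosed_univ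
    U hUopen hUcov
  refine ⟨fun x => ∑ᶠ q, ρ q x • (q : ℝ), ?_, fun x => ?_⟩
  · exact hρ.continuous_finsum_smul hUopen fun q => continuous_const.continuousOn
  · have hx : x ∈ Set.univ := Set.mem_univ x
    have hsum : ∑ i ∈ ρ.finsupport x, ρ i x = 1 := ρ.sum_finsupport hx
    have hne : (ρ.finsupport x).Nonempty := by
      by_contra h
      rw [Finset.not_nonempty_iff_eq_empty] at h
      rw [h, Finset.sum_empty] at hsum
      norm_num at hsum
    have hmem : ∀ i ∈ ρ.finsupport x, ψ x < (i : ℝ) ∧ (i : ℝ) < θ x := by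
      intro i hi
      have : x ∈ U i := hρ i (subset_closure ((ρ.mem_finsupport x).1 hi))
      exact ⟨this.1, this.2⟩
    have hpos : ∀ i ∈ ρ.finsupport x, 0 < ρ i x := fun i hi =>
      (ρ.nonneg i x).lt_of_ne' ((ρ.mem_finsupport x).1 hi)
    have heq : (∑ᶠ q, ρ q x • (q : ℝ)) = ∑ i ∈ ρ.finsupport x, ρ i x • (i : ℝ) :=
      (ρ.sum_finsupport_smul_eq_finsum (x₀ := x) fun i _ => (i : ℝ)).symm
    constructor
    · calc ψ x = ∑ i ∈ ρ.finsupport x, ρ i x • ψ x := by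
            rw [← Finset.sum_smul, hsum, one_smul]
        _ < ∑ i ∈ ρ.finsupport x, ρ i x • (i : ℝ) := by
            refine Finset.sum_lt_sum_of_nonempty hne fun i hi => ?_
            exact smul_lt_smul_of_pos_left (hmem i hi).1 (hpos i hi)
        _ = _ := heq.symm
    · calc (∑ᶠ q, ρ q x • (q : ℝ)) = ∑ i ∈ ρ.finsupport x, ρ i x • (i : ℝ) := heq
        _ < ∑ i ∈ ρ.finsupport x, ρ i x • θ x := by
            refine Finset.sum_lt_sum_of_nonempty hne fun i hi => ?_
            exact smul_lt_smul_of_pos_left (hmem i hi).2 (hpos i hi)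
        _ = θ x := by rw [← Finset.sum_smul, hsum, one_smul]
end

section
/- Let u_n : M → ℝ be Lipschitz with constants κ_n on a compact Riemannian manifold M, with Σ_n ‖u_n‖_∞ < ∞ and Σ_n κ_n < ∞. Then u = Σ_n u_n is Lipschitz with constant Σ_n κ_n, and for every (x,v) ∈ TM one has ∂⁺u(x,v) ≤ Σ_n ∂⁺u_n(x,v), where ∂⁺ denotes the Clarke upper gauge. -/
open Filter Topology

def reachableGrad {n : ℕ} (u : EuclideanSpace ℝ (Fin n) → ℝ)
    (x : EuclideanSpace ℝ (Fin n)) : Set (EuclideanSpace ℝ (Fin n) →L[ℝ] ℝ) :=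
  {p | ∃ xs : ℕ → EuclideanSpace ℝ (Fin n),
        (∀ m, DifferentiableAt ℝ u (xs m)) ∧
        Tendsto xs atTop (𝓝 x) ∧
        Tendsto (fun m => fderiv ℝ u (xs m)) atTop (𝓝 p)}

def clarkeGrad {n : ℕ} (u : EuclideanSpace ℝ (Fin n) → ℝ)
    (x : EuclideanSpace ℝ (Fin n)) : Set (EuclideanSpace ℝ (Fin n) →L[ℝ] ℝ) :=
  closure (convexHull ℝ (reachableGrad u x))

noncomputable def clarkeUpper {n : ℕ} (u : EuclideanSpace ℝ (Fin n) → ℝ)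
    (x v : EuclideanSpace ℝ (Fin n)) : ℝ :=
  sSup ((fun p : EuclideanSpace ℝ (Fin n) →L[ℝ] ℝ => p v) '' clarkeGrad u x)

open MeasureTheory

section Aux

variable {n : ℕ}

local notation "E" => EuclideanSpace ℝ (Fin n)

lemma clarkeGrad_subset_ball {u : E → ℝ} {κ : NNReal} (h : LipschitzWith κ u) (x : E) :
    clarkeGrad u x ⊆ Metric.closedBall 0 κ := by
  have h1 : reachableGrad u x ⊆ Metric.closedBall 0 κ := by
    rintro p ⟨xs, hdiff, -, hlim⟩
    refine Metric.isClosed_closedBall.mem_of_tendsto hlim (Eventually.of_forall fun m => ?_)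
    simpa [Metric.mem_closedBall, dist_zero_right] using norm_fderiv_le_of_lipschitz ℝ h
  exact closure_minimal (convexHull_min h1 (convex_closedBall _ _)) Metric.isClosed_closedBall

lemma reachableGrad_nonempty {u : E → ℝ} {κ : NNReal} (h : LipschitzWith κ u) (x : E) :
    (reachableGrad u x).Nonempty := by
  have hdense : Dense {y : E | DifferentiableAt ℝ u y} :=
    Measure.dense_of_ae (h.ae_differentiableAt (μ := volume))
  have hxs : ∀ m : ℕ, ∃ y, dist y x < 1 / (m + 1) ∧ DifferentiableAt ℝ u y := by
    intro m
    have := (Metric.dense_iff.1 hdense) x (1 / (m + 1)) (by positivity)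
    obtain ⟨y, hy1, hy2⟩ := this
    exact ⟨y, Metric.mem_ball.1 hy1, hy2⟩
  choose xs hxs1 hxs2 using hxs
  have hx : Tendsto xs atTop (𝓝 x) := by
    rw [tendsto_iff_dist_tendsto_zero]
    exact squeeze_zero (fun m => dist_nonneg) (fun m => (hxs1 m).le)
      tendsto_one_div_add_atTop_nhds_zero_nat
  have hmem : ∀ m, fderiv ℝ u (xs m) ∈ Metric.closedBall (0 : E →L[ℝ] ℝ) κ := fun m => by
    simpa [Metric.mem_closedBall, dist_zero_right] using norm_fderiv_le_of_lipschitz ℝ h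
  obtain ⟨p, -, φ, hφ, hlim⟩ :=
    (isCompact_closedBall (0 : E →L[ℝ] ℝ) κ).tendsto_subseq hmem
  exact ⟨p, xs ∘ φ, fun m => hxs2 _, hx.comp hφ.tendsto_atTop, hlim⟩

lemma reachableGrad_subset_clarke {u : E → ℝ} (x : E) :
    reachableGrad u x ⊆ clarkeGrad u x :=
  fun p hp => subset_closure (subset_convexHull ℝ _ hp)

lemma bddAbove_clarke_image {u : E → ℝ} {κ : NNReal} (h : LipschitzWith κ u) (x v : E) :
    (κ : ℝ) * ‖v‖ ∈ upperBounds ((fun p : E →L[ℝ] ℝ => p v) '' clarkeGrad u x) := by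
  rintro r ⟨q, hq, rfl⟩
  have hqn : ‖q‖ ≤ κ := by
    simpa [Metric.mem_closedBall, dist_zero_right] using clarkeGrad_subset_ball h x hq
  calc q v ≤ ‖q v‖ := le_abs_self _
    _ ≤ ‖q‖ * ‖v‖ := q.le_opNorm v
    _ ≤ κ * ‖v‖ := by gcongr

lemma le_clarkeUpper {u : E → ℝ} {κ : NNReal} (h : LipschitzWith κ u) {x v : E}
    {p : E →L[ℝ] ℝ} (hp : p ∈ clarkeGrad u x) : p v ≤ clarkeUpper u x v :=
  le_csSup ⟨_, bddAbove_clarke_image h x v⟩ ⟨p, hp, rfl⟩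

lemma abs_clarkeUpper_le {u : E → ℝ} {κ : NNReal} (h : LipschitzWith κ u) (x v : E) :
    |clarkeUpper u x v| ≤ κ * ‖v‖ := by
  obtain ⟨p, hp⟩ := (reachableGrad_nonempty h x).mono (reachableGrad_subset_clarke x)
  have hpn : ‖p‖ ≤ κ := by
    simpa [Metric.mem_closedBall, dist_zero_right] using clarkeGrad_subset_ball h x hp
  have hub : clarkeUpper u x v ≤ κ * ‖v‖ :=
    csSup_le ⟨_, ⟨p, hp, rfl⟩⟩ (fun r hr => bddAbove_clarke_image h x v hr)
  have hlb : -((κ : ℝ) * ‖v‖) ≤ clarkeUpper u x v := by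
    refine le_trans ?_ (le_clarkeUpper h hp)
    have : |p v| ≤ κ * ‖v‖ := le_trans (p.le_opNorm v) (by gcongr)
    linarith [abs_le.1 this]
  rw [abs_le]; exact ⟨by linarith, hub⟩

lemma lipschitz_ftc {g : ℝ → ℝ} {K : NNReal} (hg : LipschitzWith K g)
    (hae : ∀ᵐ s : ℝ, DifferentiableAt ℝ g s) {t : ℝ} (ht : 0 < t) :
    g t - g 0 = ∫ s in Set.Ioc 0 t, deriv g s := by
  have hgc : Continuous g := hg.continuous
  set h : ℕ → ℝ := fun k => 1 / (k + 1) with hh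
  have hhpos : ∀ k, 0 < h k := fun k => by positivity
  have hh0 : Tendsto h atTop (𝓝 0) := tendsto_one_div_add_atTop_nhds_zero_nat
  set f : ℕ → ℝ → ℝ := fun k s => (g (s + h k) - g s) / h k with hf
  have hlim1 : Tendsto (fun k => ∫ s in Set.Ioc 0 t, f k s) atTop
      (𝓝 (∫ s in Set.Ioc 0 t, deriv g s)) := by
    refine tendsto_integral_of_dominated_convergence (fun _ => (K : ℝ)) ?_ ?_ ?_ ?_
    · intro k
      exact (((hgc.comp (continuous_id.add continuous_const)).sub hgc).div_const
        _).aestronglyMeasurable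
    · exact integrable_const _
    · intro k
      refine Eventually.of_forall fun s => ?_
      have h1 : |g (s + h k) - g s| ≤ K * |h k| := by
        have := hg.dist_le_mul (s + h k) s
        simpa [Real.dist_eq, abs_sub_comm] using this
      have h2 : (0:ℝ) < |h k| := by positivity
      rw [Real.norm_eq_abs]
      show |(g (s + h k) - g s) / h k| ≤ (K : ℝ)
      rw [abs_div, div_le_iff₀ h2]
      simpa using h1
    · refine ae_restrict_of_ae (hae.mono fun s hs => ?_)
      have hslope := hasDerivAt_iff_tendsto_slope.1 hs.hasDerivAt
      have htend : Tendsto (fun k => s + h k) atTop (𝓝[≠] s) := by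
        refine tendsto_nhdsWithin_iff.2 ⟨?_, Eventually.of_forall fun k => ?_⟩
        · simpa using tendsto_const_nhds.add hh0
        · simp [Set.mem_compl_iff, (hhpos k).ne']
      exact (hslope.comp htend).congr fun k => by
        simp [Function.comp, slope_def_field, add_sub_cancel_left, hf]
  have hint : ∀ a b : ℝ, IntervalIntegrable g volume a b := fun a b =>
    hgc.intervalIntegrable a b
  set A : ℝ → ℝ := fun r => ∫ s in (0:ℝ)..r, g s with hA
  have hAderiv : ∀ r : ℝ, HasDerivAt A (g r) r := fun r =>
    intervalIntegral.integral_hasDerivAt_right (hint 0 r)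
      (hgc.stronglyMeasurableAtFilter volume (𝓝 r)) hgc.continuousAt
  have hFk : ∀ k, ∫ s in Set.Ioc 0 t, f k s
      = (A (t + h k) - A t) / h k - (A (h k) - A 0) / h k := by
    intro k
    have i1 : IntervalIntegrable (fun s : ℝ => g (s + h k)) volume 0 t :=
      (hgc.comp (continuous_id.add continuous_const)).intervalIntegrable _ _
    have e2 : (∫ s in (0:ℝ)..t, g (s + h k)) = A (t + h k) - A (h k) := by
      rw [intervalIntegral.integral_comp_add_right (fun s => g s) (h k)]
      have hadj := intervalIntegral.integral_add_adjacent_intervals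
        (hint 0 (h k)) (hint (h k) (t + h k))
      simp only [hA, zero_add]
      linarith [hadj]
    have e4 : A 0 = 0 := by simp [hA]
    calc ∫ s in Set.Ioc 0 t, f k s = ∫ s in (0:ℝ)..t, f k s :=
          (intervalIntegral.integral_of_le ht.le).symm
      _ = ((∫ s in (0:ℝ)..t, g (s + h k)) - ∫ s in (0:ℝ)..t, g s) / h k := by
          rw [← intervalIntegral.integral_sub i1 (hint 0 t), ← intervalIntegral.integral_div]
      _ = ((A (t + h k) - A (h k)) - A t) / h k := by rw [e2]
      _ = (A (t + h k) - A t) / h k - (A (h k) - A 0) / h k := by rw [e4]; ring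
  have hslopeA : ∀ r : ℝ, Tendsto (fun k => (A (r + h k) - A r) / h k) atTop (𝓝 (g r)) := by
    intro r
    have hs := hasDerivAt_iff_tendsto_slope.1 (hAderiv r)
    have htend : Tendsto (fun k => r + h k) atTop (𝓝[≠] r) := by
      refine tendsto_nhdsWithin_iff.2 ⟨?_, Eventually.of_forall fun k => ?_⟩
      · simpa using tendsto_const_nhds.add hh0
      · simp [Set.mem_compl_iff, (hhpos k).ne']
    exact (hs.comp htend).congr fun k => by
      simp [Function.comp, slope_def_field, add_sub_cancel_left]
  have hlim2 : Tendsto (fun k => ∫ s in Set.Ioc 0 t, f k s) atTop (𝓝 (g t - g 0)) := by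
    have h2 := (hslopeA t).sub (hslopeA 0)
    exact h2.congr fun k => by rw [zero_add, ← hFk k]
  exact tendsto_nhds_unique hlim2 hlim1

lemma ae_ae_line {u : E → ℝ} {κ : NNReal} (h : LipschitzWith κ u) (v : E) :
    ∀ᵐ y ∂(volume : Measure (EuclideanSpace ℝ (Fin n))),
      ∀ᵐ s : ℝ, DifferentiableAt ℝ u (y + s • v) := by
  set N := {y : E | ¬ DifferentiableAt ℝ u y} with hN
  have hNmeas : MeasurableSet N := (measurableSet_of_differentiableAt ℝ u).compl
  have hN0 : (volume : Measure (EuclideanSpace ℝ (Fin n))) N = 0 := by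
    simpa [ae_iff, hN] using h.ae_differentiableAt (μ := volume)
  set T : Set ((EuclideanSpace ℝ (Fin n)) × ℝ) := {q | q.1 + q.2 • v ∈ N} with hT
  have hmap : Measurable (fun q : (EuclideanSpace ℝ (Fin n)) × ℝ => q.1 + q.2 • v) :=
    measurable_fst.add (measurable_snd.smul_const v)
  have hTmeas : MeasurableSet T := hmap hNmeas
  set S : Set (ℝ × EuclideanSpace ℝ (Fin n)) := {q | q.2 + q.1 • v ∈ N} with hS
  have hSmeas : MeasurableSet S := (measurable_snd.add (measurable_fst.smul_const v)) hNmeas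
  have hS0 : ((volume : Measure ℝ).prod (volume : Measure (EuclideanSpace ℝ (Fin n)))) S = 0 := by
    rw [Measure.prod_apply hSmeas]
    have hsec : ∀ s : ℝ,
        (volume : Measure (EuclideanSpace ℝ (Fin n))) (Prod.mk s ⁻¹' S) = 0 := by
      intro s
      have : Prod.mk s ⁻¹' S = (fun y : EuclideanSpace ℝ (Fin n) => y + s • v) ⁻¹' N := rfl
      rw [this, measure_preimage_add_right]
      exact hN0
    simp [hsec]
  have hT0 : (((volume : Measure (EuclideanSpace ℝ (Fin n))).prod (volume : Measure ℝ))) T = 0 := by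
    have hswap := Measure.prod_swap (μ := (volume : Measure (EuclideanSpace ℝ (Fin n))))
      (ν := (volume : Measure ℝ))
    have heq : ((volume : Measure ℝ).prod (volume : Measure (EuclideanSpace ℝ (Fin n)))) S
        = (((volume : Measure (EuclideanSpace ℝ (Fin n))).prod (volume : Measure ℝ))) T := by
      rw [← hswap, Measure.map_apply measurable_swap hSmeas]
      rfl
    rw [← heq]; exact hS0
  have hae := MeasureTheory.Measure.measure_ae_null_of_prod_null hT0
  filter_upwards [hae] with y hy
  rw [Pi.zero_apply] at hy
  have heq2 : {s : ℝ | ¬ DifferentiableAt ℝ u (y + s • v)} = Prod.mk y ⁻¹' T := rfl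
  rw [ae_iff, heq2]
  exact hy

lemma lebourg {u : E → ℝ} {κ : NNReal} (h : LipschitzWith κ u) (x v : E) {ε : ℝ} (hε : 0 < ε) :
    ∃ δ > 0, ∀ y t : _, dist y x < δ → 0 < t → t < δ →
      u (y + t • v) - u y ≤ t * (clarkeUpper u x v + ε) := by
  by_contra hcon
  push_neg at hcon
  set C := clarkeUpper u x v with hC
  have hsel : ∀ j : ℕ, ∃ y : EuclideanSpace ℝ (Fin n), ∃ t : ℝ,
      dist y x < 1/(j+1:ℝ) ∧ 0 < t ∧ t < 1/(j+1:ℝ) ∧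
      t * (C + ε) < u (y + t • v) - u y := by
    intro j
    obtain ⟨y, t, h1, h2, h3, h4⟩ := hcon (1/(j+1:ℝ)) (by positivity)
    exact ⟨y, t, h1, h2, h3, h4⟩
  choose ys ts hdist hts htlt hgap using hsel
  have hdense : Dense {y : E | ∀ᵐ s : ℝ, DifferentiableAt ℝ u (y + s • v)} :=
    Measure.dense_of_ae (ae_ae_line h v)
  have hsel2 : ∀ j : ℕ, ∃ y', (∀ᵐ s : ℝ, DifferentiableAt ℝ u (y' + s • v)) ∧
      dist y' (ys j) <
        min (1/(j+1:ℝ)) ((u (ys j + ts j • v) - u (ys j) - ts j * (C+ε)) / (2*κ+1)) := by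
    intro j
    have hpos : 0 < min (1/(j+1:ℝ))
        ((u (ys j + ts j • v) - u (ys j) - ts j * (C+ε)) / (2*κ+1)) := by
      refine lt_min (by positivity) ?_
      have := hgap j
      have h2 : (0:ℝ) < 2*κ+1 := by positivity
      exact div_pos (by linarith) h2
    obtain ⟨y', h1, h2⟩ := Metric.dense_iff.1 hdense (ys j) _ hpos
    exact ⟨y', h2, Metric.mem_ball.1 h1⟩
  choose ys' hys'G hys'dist using hsel2
  have hgap' : ∀ j, ts j * (C + ε) < u (ys' j + ts j • v) - u (ys' j) := by
    intro j
    have h2κ : (0:ℝ) < 2*κ+1 := by positivity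
    have hd : dist (ys' j) (ys j)
        < (u (ys j + ts j • v) - u (ys j) - ts j * (C+ε)) / (2*κ+1) :=
      (hys'dist j).trans_le (min_le_right _ _)
    have hd' : dist (ys' j) (ys j) * (2*κ+1)
        < u (ys j + ts j • v) - u (ys j) - ts j * (C+ε) := (lt_div_iff₀ h2κ).1 hd
    have l1 : |u (ys' j + ts j • v) - u (ys j + ts j • v)| ≤ κ * dist (ys' j) (ys j) := by
      have h0 := h.dist_le_mul (ys' j + ts j • v) (ys j + ts j • v)
      rw [Real.dist_eq, dist_add_right] at h0
      exact h0
    have l2 : |u (ys' j) - u (ys j)| ≤ κ * dist (ys' j) (ys j) := by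
      have h0 := h.dist_le_mul (ys' j) (ys j)
      rwa [Real.dist_eq] at h0
    have l1' := abs_le.1 l1
    have l2' := abs_le.1 l2
    have hdn : (0:ℝ) ≤ dist (ys' j) (ys j) := dist_nonneg
    have := hgap j
    nlinarith [l1'.1, l1'.2, l2'.1, l2'.2]
  have hstep : ∀ j, ∃ s, s ∈ Set.Ioc 0 (ts j) ∧ DifferentiableAt ℝ u (ys' j + s • v) ∧
      C + ε ≤ (fderiv ℝ u (ys' j + s • v)) v := by
    intro j
    by_contra hno
    push_neg at hno
    set g : ℝ → ℝ := fun s => u (ys' j + s • v) with hg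
    have hlin : LipschitzWith ‖v‖₊ (fun s : ℝ => ys' j + s • v) := by
      refine LipschitzWith.of_dist_le_mul fun a b => ?_
      rw [dist_add_left, dist_eq_norm, ← sub_smul, norm_smul, Real.dist_eq]
      simp [Real.norm_eq_abs, mul_comm]
    have hgl : LipschitzWith (κ * ‖v‖₊) g := h.comp hlin
    have hgderiv : ∀ s : ℝ, DifferentiableAt ℝ u (ys' j + s • v) →
        HasDerivAt g ((fderiv ℝ u (ys' j + s • v)) v) s := by
      intro s hs
      have hline : HasDerivAt (fun s : ℝ => ys' j + s • v) v s := by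
        simpa using ((hasDerivAt_id s).smul_const v).const_add (ys' j)
      exact hs.hasFDerivAt.comp_hasDerivAt s hline
    have hgae : ∀ᵐ s : ℝ, DifferentiableAt ℝ g s :=
      (hys'G j).mono fun s hs => (hgderiv s hs).differentiableAt
    have hftc := lipschitz_ftc hgl hgae (hts j)
    have hub : ∀ᵐ s ∂(volume.restrict (Set.Ioc 0 (ts j))), deriv g s ≤ C + ε := by
      refine (ae_restrict_iff' measurableSet_Ioc).2 ?_
      filter_upwards [hys'G j] with s hs hmem
      rw [(hgderiv s hs).deriv]
      exact (hno s hmem hs).le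
    have hdint : Integrable (deriv g) (volume.restrict (Set.Ioc 0 (ts j))) := by
      refine Integrable.mono' (integrable_const ((κ * ‖v‖₊ : NNReal) : ℝ))
        ((measurable_deriv g).aestronglyMeasurable) ?_
      exact Eventually.of_forall fun s => norm_deriv_le_of_lipschitz hgl
    have hint2 : ∫ s in Set.Ioc 0 (ts j), deriv g s ≤ (C + ε) * ts j := by
      calc ∫ s in Set.Ioc 0 (ts j), deriv g s ≤ ∫ _s in Set.Ioc 0 (ts j), (C+ε) :=
            integral_mono_ae hdint (integrable_const _) hub
        _ = (C + ε) * ts j := by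
            rw [setIntegral_const, measureReal_def, Real.volume_Ioc]
            rw [ENNReal.toReal_ofReal (by linarith [hts j])]
            simp [smul_eq_mul]
            ring
    have hgv : g (ts j) - g 0 = u (ys' j + ts j • v) - u (ys' j) := by simp [hg]
    have := hgap' j
    rw [← hgv, hftc] at this
    linarith
  choose ss hss hdiffz hbig using hstep
  set zs : ℕ → E := fun j => ys' j + ss j • v with hzs
  have hz : Tendsto zs atTop (𝓝 x) := by
    rw [tendsto_iff_dist_tendsto_zero]
    have hb : ∀ j, dist (zs j) x ≤ (1/(j+1:ℝ)) * (2 + ‖v‖) := by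
      intro j
      have h1 : dist (zs j) (ys' j) = ss j * ‖v‖ := by
        rw [hzs]
        simp only []
        rw [dist_eq_norm]
        simp [norm_smul, Real.norm_eq_abs, abs_of_pos (hss j).1]
      have h2 : dist (ys' j) (ys j) ≤ 1/(j+1:ℝ) := ((hys'dist j).trans_le (min_le_left _ _)).le
      have h3 : dist (ys j) x ≤ 1/(j+1:ℝ) := (hdist j).le
      have h4 : ss j ≤ 1/(j+1:ℝ) := le_trans (hss j).2 (htlt j).le
      have h5 : (0:ℝ) ≤ ‖v‖ := norm_nonneg v
      have h6 : ss j * ‖v‖ ≤ (1/(j+1:ℝ)) * ‖v‖ := by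
        apply mul_le_mul_of_nonneg_right h4 h5
      calc dist (zs j) x ≤ dist (zs j) (ys' j) + dist (ys' j) (ys j) + dist (ys j) x :=
            dist_triangle4 _ _ _ _
        _ ≤ (1/(j+1:ℝ)) * ‖v‖ + 1/(j+1:ℝ) + 1/(j+1:ℝ) := by rw [h1]; gcongr
        _ = (1/(j+1:ℝ)) * (2 + ‖v‖) := by ring
    refine squeeze_zero (fun _ => dist_nonneg) hb ?_
    have := tendsto_one_div_add_atTop_nhds_zero_nat.mul_const (2 + ‖v‖)
    simpa using this
  have hmem : ∀ j, fderiv ℝ u (zs j) ∈ Metric.closedBall (0 : E →L[ℝ] ℝ) κ := fun j => by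
    simpa [Metric.mem_closedBall, dist_zero_right] using norm_fderiv_le_of_lipschitz ℝ h
  obtain ⟨p, -, φ, hφ, hlim⟩ := (isCompact_closedBall (0 : E →L[ℝ] ℝ) (κ:ℝ)).tendsto_subseq hmem
  have hreach : p ∈ reachableGrad u x :=
    ⟨zs ∘ φ, fun m => hdiffz _, hz.comp hφ.tendsto_atTop, hlim⟩
  have h1 : p v ≤ C := le_clarkeUpper h (reachableGrad_subset_clarke x hreach)
  have h2 : C + ε ≤ p v := by
    have hev : Tendsto (fun j => (fderiv ℝ u (zs (φ j))) v) atTop (𝓝 (p v)) :=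
      ((ContinuousLinearMap.apply ℝ ℝ v).continuous.tendsto p).comp hlim
    exact ge_of_tendsto hev (Eventually.of_forall fun j => hbig _)
  linarith

end Aux

lemma lebourg_fin {n : ℕ} {u : ℕ → EuclideanSpace ℝ (Fin n) → ℝ} {κ : ℕ → NNReal}
    (hLip : ∀ m, LipschitzWith (κ m) (u m)) (x v : EuclideanSpace ℝ (Fin n))
    {ε' : ℝ} (hε' : 0 < ε') : ∀ N : ℕ, ∃ δ > 0, ∀ m < N, ∀ (y : EuclideanSpace ℝ (Fin n)) (t : ℝ),
      dist y x < δ → 0 < t → t < δ →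
      u m (y + t • v) - u m y ≤ t * (clarkeUpper (u m) x v + ε') := by
  intro N
  induction N with
  | zero => exact ⟨1, one_pos, fun m hm => absurd hm (Nat.not_lt_zero m)⟩
  | succ N ih =>
    obtain ⟨δ, hδ, hN⟩ := ih
    obtain ⟨δ', hδ', h'⟩ := lebourg (hLip N) x v hε'
    refine ⟨min δ δ', lt_min hδ hδ', fun m hm y t h1 h2 h3 => ?_⟩
    rcases Nat.lt_succ_iff_lt_or_eq.1 hm with hlt | rfl
    · exact hN m hlt y t (h1.trans_le (min_le_left _ _)) h2 (h3.trans_le (min_le_left _ _))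
    · exact h' y t (h1.trans_le (min_le_right _ _)) h2 (h3.trans_le (min_le_right _ _))

set_option maxHeartbeats 2000000 in
/-- If `u_m` are Lipschitz with constants `κ_m`, `Σ ‖u_m‖_∞ < ∞` and `Σ κ_m < ∞`, then
`u = Σ u_m` is Lipschitz with constant `Σ κ_m` and `∂⁺u(x,v) ≤ Σ ∂⁺u_m(x,v)`. -/
theorem clarkeUpper_tsum_le {n : ℕ}
    (u : ℕ → EuclideanSpace ℝ (Fin n) → ℝ)
    (κ : ℕ → NNReal) (hLip : ∀ m, LipschitzWith (κ m) (u m))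
    (c : ℕ → ℝ) (hbd : ∀ m x, |u m x| ≤ c m) (hc : Summable c)
    (hκ : Summable κ) :
    LipschitzWith (∑' m, κ m) (fun x => ∑' m, u m x) ∧
    ∀ x v, clarkeUpper (fun y => ∑' m, u m y) x v ≤ ∑' m, clarkeUpper (u m) x v := by
  have hκR : Summable (fun m => (κ m : ℝ)) := NNReal.summable_coe.2 hκ
  have hsum : ∀ y, Summable (fun m => u m y) := fun y =>
    (Summable.of_nonneg_of_le (fun m => abs_nonneg _) (fun m => hbd m y) hc).of_abs
  set U : EuclideanSpace ℝ (Fin n) → ℝ := fun y => ∑' m, u m y with hU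
  have habs : ∀ y z : EuclideanSpace ℝ (Fin n), Summable (fun m => |u m y - u m z|) := fun y z =>
    Summable.of_nonneg_of_le (fun m => abs_nonneg _)
      (fun m => by have := (hLip m).dist_le_mul y z; rwa [Real.dist_eq] at this)
      (hκR.mul_right (dist y z))
  have hdiffq : ∀ y z, |U y - U z| ≤ (∑' m, (κ m : ℝ)) * dist y z := by
    intro y z
    simp only [hU]
    rw [← Summable.tsum_sub (hsum y) (hsum z)]
    calc |∑' m, (u m y - u m z)| ≤ ∑' m, |u m y - u m z| := by
          simpa [Real.norm_eq_abs] using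
            norm_tsum_le_tsum_norm (f := fun m => u m y - u m z)
              (by simpa [Real.norm_eq_abs] using habs y z)
      _ ≤ ∑' m, (κ m : ℝ) * dist y z :=
          Summable.tsum_le_tsum (fun m => by
            have := (hLip m).dist_le_mul y z; rwa [Real.dist_eq] at this)
            (habs y z) (hκR.mul_right _)
      _ = (∑' m, (κ m : ℝ)) * dist y z := tsum_mul_right
  have hUlip : LipschitzWith (∑' m, κ m) U := by
    rw [lipschitzWith_iff_dist_le_mul]
    intro y z
    rw [Real.dist_eq, NNReal.coe_tsum]
    exact hdiffq y z
  refine ⟨hUlip, ?_⟩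
  intro x v
  set S : ℝ := ∑' m, clarkeUpper (u m) x v with hS
  have hCabs : ∀ m, |clarkeUpper (u m) x v| ≤ (κ m : ℝ) * ‖v‖ := fun m =>
    abs_clarkeUpper_le (hLip m) x v
  have hCsum : Summable (fun m => clarkeUpper (u m) x v) :=
    (Summable.of_nonneg_of_le (fun m => abs_nonneg _) hCabs (hκR.mul_right _)).of_abs
  have hmain : ∀ p ∈ reachableGrad U x, p v ≤ S := by
    rintro p ⟨xs, hdiff, hx, hplim⟩
    refine le_of_forall_pos_le_add fun ε hε => ?_
    have hε3 : (0:ℝ) < ε/3 := by linarith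
    have htail : Tendsto (fun N => ∑' m, (κ (m + N) : ℝ)) atTop (𝓝 0) := by
      have hpart : Tendsto (fun N => ∑ m ∈ Finset.range N, (κ m : ℝ)) atTop
          (𝓝 (∑' m, (κ m : ℝ))) := hκR.hasSum.tendsto_sum_nat
      have heq : ∀ N, ∑' m, (κ (m + N) : ℝ)
          = (∑' m, (κ m:ℝ)) - ∑ m ∈ Finset.range N, (κ m:ℝ) := by
        intro N
        have := Summable.sum_add_tsum_nat_add N hκR
        linarith
      rw [funext heq]
      have h0 : Tendsto (fun N => (∑' m, (κ m:ℝ)) - ∑ m ∈ Finset.range N, (κ m : ℝ))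
          atTop (𝓝 ((∑' m, (κ m:ℝ)) - ∑' m, (κ m:ℝ))) := tendsto_const_nhds.sub hpart
      rw [sub_self] at h0
      exact h0
    obtain ⟨N, htailκ⟩ := (htail.eventually
      (gt_mem_nhds (show (0:ℝ) < ε/3/(‖v‖+1) by positivity))).exists
    have htailnn : (0:ℝ) ≤ ∑' m, (κ (m + N) : ℝ) := tsum_nonneg (fun m => (κ _).2)
    obtain ⟨δ, hδpos, hδ⟩ := lebourg_fin hLip x v
      (show (0:ℝ) < ε/3/(N+1) by positivity) N
    have hquot : ∀ y, dist y x < δ → ∀ t : ℝ, 0 < t → t < δ →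
        U (y + t • v) - U y ≤ t * (S + ε) := by
      intro y hy t ht htδ
      have hsummand : Summable (fun m => u m (y + t • v) - u m y) :=
        (hsum _).sub (hsum _)
      have hdecomp : U (y + t • v) - U y
          = (∑ m ∈ Finset.range N, (u m (y + t•v) - u m y))
            + ∑' m, (u (m+N) (y + t•v) - u (m+N) y) := by
        simp only [hU]
        rw [← Summable.tsum_sub (hsum _) (hsum _)]
        exact (Summable.sum_add_tsum_nat_add N hsummand).symm
      have hfin : ∑ m ∈ Finset.range N, (u m (y + t•v) - u m y)
          ≤ ∑ m ∈ Finset.range N, t * (clarkeUpper (u m) x v + ε/3/(N+1)) :=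
        Finset.sum_le_sum fun m hm => hδ m (Finset.mem_range.1 hm) y t hy ht htδ
      have hvne : (‖v‖+1 : ℝ) ≠ 0 := by positivity
      have htail2 : ∑' m, (u (m+N) (y + t•v) - u (m+N) y) ≤ t * (ε/3) := by
        have hb : ∀ m, (u (m+N) (y + t•v) - u (m+N) y) ≤ (κ (m+N) : ℝ) * (t * ‖v‖) := by
          intro m
          have hl := (hLip (m+N)).dist_le_mul (y + t • v) y
          rw [Real.dist_eq] at hl
          have h2 : dist (y + t • v) y = t * ‖v‖ := by
            rw [dist_eq_norm]
            simp [norm_smul, Real.norm_eq_abs, abs_of_pos ht]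
          calc u (m+N) (y + t•v) - u (m+N) y
              ≤ |u (m+N) (y + t•v) - u (m+N) y| := le_abs_self _
            _ ≤ (κ (m+N):ℝ) * dist (y + t•v) y := hl
            _ = (κ (m+N):ℝ) * (t * ‖v‖) := by rw [h2]
        have hsumtail : Summable (fun m => (u (m+N) (y + t•v) - u (m+N) y)) :=
          (summable_nat_add_iff N).2 hsummand
        calc ∑' m, (u (m+N) (y + t•v) - u (m+N) y)
            ≤ ∑' m, (κ (m+N):ℝ) * (t*‖v‖) :=
              Summable.tsum_le_tsum hb hsumtail (((summable_nat_add_iff N).2 hκR).mul_right _)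
          _ = (∑' m, (κ (m+N):ℝ)) * (t*‖v‖) := tsum_mul_right
          _ ≤ (ε/3/(‖v‖+1)) * (t*‖v‖) :=
              mul_le_mul_of_nonneg_right htailκ.le (by positivity)
          _ = t * (ε/3/(‖v‖+1) * ‖v‖) := by ring
          _ ≤ t * (ε/3/(‖v‖+1) * (‖v‖+1)) := by
              refine mul_le_mul_of_nonneg_left
                (mul_le_mul_of_nonneg_left (by linarith) (by positivity)) ht.le
          _ = t * (ε/3) := by rw [div_mul_cancel₀ _ hvne]
      have hCfin : ∑ m ∈ Finset.range N, clarkeUpper (u m) x v ≤ S + ε/3 := by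
        have hsplit := Summable.sum_add_tsum_nat_add N hCsum
        have h1 : ∀ m, -((κ (m+N):ℝ) * ‖v‖) ≤ clarkeUpper (u (m+N)) x v := fun m =>
          (abs_le.1 (hCabs (m+N))).1
        have h2 : ∑' m, -((κ (m+N):ℝ) * ‖v‖) ≤ ∑' m, clarkeUpper (u (m+N)) x v :=
          Summable.tsum_le_tsum h1 (((summable_nat_add_iff N).2 (hκR.mul_right _)).neg)
            ((summable_nat_add_iff N).2 hCsum)
        have h3 : ∑' m, -((κ (m+N):ℝ) * ‖v‖) = -((∑' m, (κ (m+N):ℝ)) * ‖v‖) := by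
          rw [tsum_neg, tsum_mul_right]
        have h4 : (∑' m, (κ (m+N):ℝ)) * ‖v‖ ≤ ε/3 := by
          calc (∑' m, (κ (m+N):ℝ)) * ‖v‖ ≤ (ε/3/(‖v‖+1)) * ‖v‖ :=
                mul_le_mul_of_nonneg_right htailκ.le (norm_nonneg v)
            _ ≤ (ε/3/(‖v‖+1)) * (‖v‖+1) :=
                mul_le_mul_of_nonneg_left (by linarith) (by positivity)
            _ = ε/3 := div_mul_cancel₀ _ hvne
        rw [h3] at h2
        linarith
      have hsumeq : ∑ m ∈ Finset.range N, t * (clarkeUpper (u m) x v + ε/3/(N+1))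
          = t * (∑ m ∈ Finset.range N, clarkeUpper (u m) x v) + N * t * (ε/3/(N+1)) := by
        rw [← Finset.mul_sum, Finset.sum_add_distrib, Finset.sum_const, Finset.card_range,
          nsmul_eq_mul]
        ring
      have hNε : (N:ℝ) * (ε/3/(N+1)) ≤ ε/3 := by
        have h1 : (N:ℝ)/(N+1) ≤ 1 := by
          rw [div_le_one (by positivity)]; linarith
        calc (N:ℝ) * (ε/3/(N+1)) = (ε/3) * ((N:ℝ)/(N+1)) := by ring
          _ ≤ (ε/3) * 1 := mul_le_mul_of_nonneg_left h1 hε3.le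
          _ = ε/3 := mul_one _
      calc U (y + t•v) - U y
          = (∑ m ∈ Finset.range N, (u m (y + t•v) - u m y))
            + ∑' m, (u (m+N) (y + t•v) - u (m+N) y) := hdecomp
        _ ≤ (∑ m ∈ Finset.range N, t * (clarkeUpper (u m) x v + ε/3/(N+1))) + t * (ε/3) :=
            add_le_add hfin htail2
        _ = t * (∑ m ∈ Finset.range N, clarkeUpper (u m) x v)
            + N * t * (ε/3/(N+1)) + t*(ε/3) := by rw [hsumeq]
        _ ≤ t * (S + ε/3) + t * (ε/3) + t*(ε/3) := by
            have e1 : t * (∑ m ∈ Finset.range N, clarkeUpper (u m) x v) ≤ t * (S + ε/3) :=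
              mul_le_mul_of_nonneg_left hCfin ht.le
            have e2 : (N:ℝ) * t * (ε/3/(N+1)) ≤ t * (ε/3) := by
              calc (N:ℝ) * t * (ε/3/(N+1)) = t * ((N:ℝ) * (ε/3/(N+1))) := by ring
                _ ≤ t * (ε/3) := mul_le_mul_of_nonneg_left hNε ht.le
            linarith
        _ = t * (S + ε) := by ring
    have hfd : ∀ j, dist (xs j) x < δ → (fderiv ℝ U (xs j)) v ≤ S + ε := by
      intro j hj
      have hline : HasDerivAt (fun t : ℝ => xs j + t • v) v 0 := by
        simpa using ((hasDerivAt_id (0:ℝ)).smul_const v).const_add (xs j)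
      have hgd : HasDerivAt (fun t : ℝ => U (xs j + t • v)) ((fderiv ℝ U (xs j)) v) 0 := by
        have h0 : HasFDerivAt U (fderiv ℝ U (xs j)) ((fun t : ℝ => xs j + t • v) 0) := by
          simpa using (hdiff j).hasFDerivAt
        exact h0.comp_hasDerivAt 0 hline
      have hslope := hasDerivAt_iff_tendsto_slope.1 hgd
      set tk : ℕ → ℝ := fun k => δ / (k + 2) with htk
      have htkpos : ∀ k, 0 < tk k := fun k => by positivity
      have htklt : ∀ k, tk k < δ := by
        intro k
        rw [htk]
        simp only []
        rw [div_lt_iff₀ (by positivity)]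
        nlinarith [hδpos]
      have htk0 : Tendsto tk atTop (𝓝[≠] (0:ℝ)) := by
        refine tendsto_nhdsWithin_iff.2 ⟨?_, Eventually.of_forall fun k => (htkpos k).ne'⟩
        refine squeeze_zero (g := fun k : ℕ => δ * (1/((k:ℝ)+1))) (fun k => (htkpos k).le)
          (fun k => ?_) ?_
        · show tk k ≤ δ * (1/((k:ℝ)+1))
          rw [htk]
          simp only []
          rw [mul_one_div]
          gcongr
          norm_num
        · simpa using (tendsto_one_div_add_atTop_nhds_zero_nat.const_mul δ)
      have hsl := hslope.comp htk0
      refine le_of_tendsto hsl (Eventually.of_forall fun k => ?_)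
      have hq := hquot (xs j) hj (tk k) (htkpos k) (htklt k)
      show slope (fun t : ℝ => U (xs j + t • v)) 0 (tk k) ≤ S + ε
      rw [slope_def_field]
      have h00 : U (xs j + (0:ℝ) • v) = U (xs j) := by simp
      rw [h00, sub_zero, div_le_iff₀ (htkpos k)]
      linarith
    have hple : Tendsto (fun j => (fderiv ℝ U (xs j)) v) atTop (𝓝 (p v)) :=
      ((ContinuousLinearMap.apply ℝ ℝ v).continuous.tendsto p).comp hplim
    refine le_of_tendsto hple ?_
    filter_upwards [Metric.tendsto_nhds.1 hx δ hδpos] with j hj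
    exact hfd j hj
  have hconv : Convex ℝ {p : EuclideanSpace ℝ (Fin n) →L[ℝ] ℝ | p v ≤ S} :=
    convex_halfSpace_le ⟨fun a b => by simp, fun r a => by simp⟩ S
  have hclosed : IsClosed {p : EuclideanSpace ℝ (Fin n) →L[ℝ] ℝ | p v ≤ S} := by
    have : {p : EuclideanSpace ℝ (Fin n) →L[ℝ] ℝ | p v ≤ S}
        = (ContinuousLinearMap.apply ℝ ℝ v) ⁻¹' Set.Iic S := rfl
    rw [this]
    exact IsClosed.preimage (ContinuousLinearMap.apply ℝ ℝ v).continuous isClosed_Iic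
  have hsubset : clarkeGrad U x ⊆ {p : EuclideanSpace ℝ (Fin n) →L[ℝ] ℝ | p v ≤ S} :=
    closure_minimal (convexHull_min hmain hconv) hclosed
  have hne : ((fun p : EuclideanSpace ℝ (Fin n) →L[ℝ] ℝ => p v) '' clarkeGrad U x).Nonempty :=
    ((reachableGrad_nonempty hUlip x).mono (reachableGrad_subset_clarke x)).image _
  refine csSup_le hne ?_
  rintro r ⟨q, hq, rfl⟩
  exact hsubset hq
end

section
/- Let γ : [0,∞) → M be a globally Lipschitz curve on a compact manifold M, and for t > 0 let μ̃_t be the probability measure on TM defined by ∫ ψ dμ̃_t = (1/t) ∫_0^t ψ(γ(s), γ'(s)) ds. Then any weak-* limit μ̃ of μ̃_{t_i} with t_i → ∞ is a closed probability measure: it has compact support, ∫ ‖v‖ dμ̃ < ∞, and ∫_{TM} d_x f(v) dμ̃(x,v) = 0 for every C¹ function f : M → ℝ. -/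
open Filter Topology MeasureTheory

lemma lipschitz_ftc_s13 {F g : ℝ → ℝ} {L : NNReal} (hF : LipschitzWith L F)
    (hd : ∀ᵐ s ∂(volume : Measure ℝ), HasDerivAt F (g s) s)
    {t : ℝ} (ht : 0 ≤ t) :
    ∫ s in Set.Ioc (0:ℝ) t, g s = F t - F 0 := by
  set h : ℕ → ℝ := fun k => 1 / (k + 1) with hh
  have hpos : ∀ k, 0 < h k := fun k => by positivity
  have hto : Tendsto h atTop (𝓝 0) := tendsto_one_div_add_atTop_nhds_zero_nat
  have hFc : Continuous F := hF.continuous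
  have hint : ∀ a b : ℝ, IntervalIntegrable F volume a b := fun a b =>
    hFc.intervalIntegrable a b
  set G : ℝ → ℝ := fun u => ∫ x in (0:ℝ)..u, F x with hG
  have hGd : ∀ u, HasDerivAt G (F u) u := fun u =>
    intervalIntegral.integral_hasDerivAt_right (hint 0 u)
      (hFc.stronglyMeasurableAtFilter _ _) hFc.continuousAt
  have slope_tendsto : ∀ (φ : ℝ → ℝ) (φ' u : ℝ), HasDerivAt φ φ' u →
      Tendsto (fun k => (φ (u + h k) - φ u) / h k) atTop (𝓝 φ') := by
    intro φ φ' u hu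
    have h1 : Tendsto (fun k => u + h k) atTop (𝓝[≠] u) := by
      apply tendsto_nhdsWithin_of_tendsto_nhds_of_eventually_within
      · simpa using tendsto_const_nhds.add hto
      · exact Eventually.of_forall fun k => by
          simp [Set.mem_setOf_eq, (hpos k).ne']
    have h2 := (hasDerivAt_iff_tendsto_slope.1 hu).comp h1
    have heq : (fun k => (φ (u + h k) - φ u) / h k) = slope φ u ∘ fun k => u + h k := by
      funext k
      simp only [Function.comp_apply]
      rw [slope_def_field]
      congr 1
      ring
    rw [heq]
    exact h2
  set D : ℕ → ℝ → ℝ := fun k s => (F (s + h k) - F s) / h k with hD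
  haveI : IsFiniteMeasure ((volume : Measure ℝ).restrict (Set.Ioc (0:ℝ) t)) := by
    constructor
    rw [Measure.restrict_apply_univ, Real.volume_Ioc]
    exact ENNReal.ofReal_lt_top
  have key1 : Tendsto (fun k => ∫ s in Set.Ioc (0:ℝ) t, D k s) atTop
      (𝓝 (∫ s in Set.Ioc (0:ℝ) t, g s)) := by
    apply tendsto_integral_of_dominated_convergence (fun _ => (L : ℝ))
    · intro k
      exact (((hFc.comp (continuous_id.add continuous_const)).sub hFc).div_const
        _).aestronglyMeasurable
    · exact integrable_const _
    · intro k
      apply Eventually.of_forall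
      intro s
      have hdist : dist (F (s + h k)) (F s) ≤ L * dist (s + h k) s := hF.dist_le_mul _ _
      rw [Real.dist_eq, Real.dist_eq, add_sub_cancel_left, abs_of_pos (hpos k)] at hdist
      rw [Real.norm_eq_abs, hD, abs_div, abs_of_pos (hpos k), div_le_iff₀ (hpos k)]
      simpa [Real.dist_eq] using hdist
    · exact ae_restrict_of_ae (hd.mono fun s hs => slope_tendsto F (g s) s hs)
  have key2 : Tendsto (fun k => ∫ s in Set.Ioc (0:ℝ) t, D k s) atTop
      (𝓝 (F t - F 0)) := by
    have hcalc : ∀ k, ∫ s in Set.Ioc (0:ℝ) t, D k s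
        = (G (t + h k) - G t) / h k - (G (0 + h k) - G 0) / h k := by
      intro k
      have e1 : ∫ s in Set.Ioc (0:ℝ) t, D k s = ∫ s in (0:ℝ)..t, D k s :=
        (intervalIntegral.integral_of_le ht).symm
      have e2 : ∫ s in (0:ℝ)..t, D k s
          = (∫ s in (0:ℝ)..t, F (s + h k) - F s) / h k := by
        simp only [hD, intervalIntegral.integral_div]
      have e3 : ∫ s in (0:ℝ)..t, (F (s + h k) - F s)
          = (∫ s in (0:ℝ)..t, F (s + h k)) - ∫ s in (0:ℝ)..t, F s := by
        apply intervalIntegral.integral_sub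
        · exact (hFc.comp (continuous_id.add continuous_const)).intervalIntegrable _ _
        · exact hint _ _
      have e4 : ∫ s in (0:ℝ)..t, F (s + h k) = ∫ s in (h k)..(t + h k), F s := by
        simpa using intervalIntegral.integral_comp_add_right (a := (0:ℝ)) (b := t) F (h k)
      have e5 : ∫ s in (h k)..(t + h k), F s = G (t + h k) - G (h k) :=
        (intervalIntegral.integral_interval_sub_left (hint 0 (t + h k)) (hint 0 (h k))).symm
      have hG0 : G 0 = 0 := intervalIntegral.integral_same
      rw [e1, e2, e3, e4, e5]
      rw [hG0]
      have : G t = ∫ s in (0:ℝ)..t, F s := rfl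
      rw [← this]
      ring
    simp only [hcalc]
    exact (slope_tendsto G (F t) t (hGd t)).sub (slope_tendsto G (F 0) 0 (hGd 0))
  exact tendsto_nhds_unique key1 key2

/-- Any weak-* limit of the occupation measures `μ̃_t` of a Lipschitz curve with values in
a compact set is a closed probability measure: it has compact support, finite first moment
in the velocity, and annihilates the differentials of bounded C¹ functions. -/
theorem occupation_measure_limit_is_closed {n : ℕ}
    (γ γ' : ℝ → EuclideanSpace ℝ (Fin n)) (κ : NNReal)
    (hγ : LipschitzWith κ γ)
    (hderiv : ∀ᵐ s ∂(volume : Measure ℝ), HasDerivAt γ (γ' s) s)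
    (hmeas : Measurable γ')
    (hbound : ∀ s, ‖γ' s‖ ≤ κ)
    (K : Set (EuclideanSpace ℝ (Fin n))) (hK : IsCompact K) (hrange : ∀ s, γ s ∈ K)
    (μt : ℝ → Measure (EuclideanSpace ℝ (Fin n) × EuclideanSpace ℝ (Fin n)))
    (hμt : ∀ t : ℝ, 0 < t → μt t =
      Measure.map (fun s => (γ s, γ' s))
        ((ENNReal.ofReal t)⁻¹ • (volume : Measure ℝ).restrict (Set.Ioc 0 t)))
    (μlim : Measure (EuclideanSpace ℝ (Fin n) × EuclideanSpace ℝ (Fin n)))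
    (ts : ℕ → ℝ) (hts : ∀ i, 0 < ts i) (htop : Tendsto ts atTop atTop)
    (hlim : ∀ ψ : EuclideanSpace ℝ (Fin n) × EuclideanSpace ℝ (Fin n) → ℝ,
      Continuous ψ → (∃ Cψ : ℝ, ∀ q, |ψ q| ≤ Cψ) →
      Tendsto (fun i => ∫ q, ψ q ∂(μt (ts i))) atTop (𝓝 (∫ q, ψ q ∂μlim))) :
    IsProbabilityMeasure μlim ∧
    (∃ K' : Set (EuclideanSpace ℝ (Fin n) × EuclideanSpace ℝ (Fin n)),
      IsCompact K' ∧ μlim K'ᶜ = 0) ∧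
    Integrable (fun q : EuclideanSpace ℝ (Fin n) × EuclideanSpace ℝ (Fin n) => ‖q.2‖) μlim ∧
    ∀ f : EuclideanSpace ℝ (Fin n) → ℝ, ContDiff ℝ 1 f → (∃ C : ℝ, ∀ x, |f x| ≤ C) →
      ∫ q : EuclideanSpace ℝ (Fin n) × EuclideanSpace ℝ (Fin n),
        (fderiv ℝ f q.1) q.2 ∂μlim = 0 := by
  have hmap : Measurable fun s => (γ s, γ' s) := (hγ.continuous.measurable).prodMk hmeas
  -- occupation measure integral formula
  have occ : ∀ (ψ : EuclideanSpace ℝ (Fin n) × EuclideanSpace ℝ (Fin n) → ℝ),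
      Continuous ψ → ∀ t : ℝ, 0 < t →
      ∫ q, ψ q ∂(μt t) = t⁻¹ * ∫ s in Set.Ioc (0:ℝ) t, ψ (γ s, γ' s) := by
    intro ψ hψ t ht
    rw [hμt t ht, integral_map hmap.aemeasurable hψ.aestronglyMeasurable,
      integral_smul_measure, ENNReal.toReal_inv, ENNReal.toReal_ofReal ht.le, smul_eq_mul]
  -- μlim is a probability measure
  have h1 : ∀ i, ∫ q, (1:ℝ) ∂(μt (ts i)) = 1 := by
    intro i
    rw [occ _ continuous_const _ (hts i), setIntegral_const, measureReal_def, Real.volume_Ioc, smul_eq_mul,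
      mul_one, ENNReal.toReal_ofReal (by linarith [hts i])]
    rw [sub_zero]
    exact inv_mul_cancel₀ (hts i).ne'
  have hlim1 := hlim (fun _ => 1) continuous_const ⟨1, fun q => by norm_num⟩
  simp only [h1] at hlim1
  have hone : ∫ _q, (1:ℝ) ∂μlim = 1 := tendsto_nhds_unique hlim1 tendsto_const_nhds
  have hprob : IsProbabilityMeasure μlim := by
    constructor
    rw [integral_const, smul_eq_mul, mul_one] at hone
    exact (ENNReal.toReal_eq_one_iff _).1 hone
  haveI := hprob
  -- compact support
  set K' := K ×ˢ Metric.closedBall (0 : EuclideanSpace ℝ (Fin n)) κ with hK'def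
  have hK' : IsCompact K' := hK.prod (isCompact_closedBall _ _)
  have hmem : ∀ s, (γ s, γ' s) ∈ K' := fun s =>
    ⟨hrange s, by simpa [Metric.mem_closedBall, dist_zero_right] using hbound s⟩
  have hK'ne : K'.Nonempty := ⟨_, hmem 0⟩
  set ψ0 : EuclideanSpace ℝ (Fin n) × EuclideanSpace ℝ (Fin n) → ℝ :=
    fun q => min 1 (Metric.infDist q K') with hψ0def
  have hψ0c : Continuous ψ0 := continuous_const.min (Metric.continuous_infDist_pt _)
  have hψ0nonneg : ∀ q, 0 ≤ ψ0 q := fun q => le_min one_pos.le Metric.infDist_nonneg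
  have hψ0le : ∀ q, ψ0 q ≤ 1 := fun q => min_le_left _ _
  have hψ0zero : ∀ s, ψ0 (γ s, γ' s) = 0 := fun s => by
    simp [hψ0def, Metric.infDist_zero_of_mem (hmem s)]
  have h0 : ∀ i, ∫ q, ψ0 q ∂(μt (ts i)) = 0 := fun i => by
    rw [occ _ hψ0c _ (hts i)]
    simp [hψ0zero]
  have hlim0 := hlim ψ0 hψ0c ⟨1, fun q => abs_le.2 ⟨by linarith [hψ0nonneg q], hψ0le q⟩⟩
  simp only [h0] at hlim0
  have hint0 : ∫ q, ψ0 q ∂μlim = 0 := tendsto_nhds_unique hlim0 tendsto_const_nhds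
  have hψ0int : Integrable ψ0 μlim :=
    (integrable_const (1:ℝ)).mono' hψ0c.aestronglyMeasurable
      (Eventually.of_forall fun q => by
        rw [Real.norm_eq_abs, abs_of_nonneg (hψ0nonneg q)]; exact hψ0le q)
  have hae0 : ψ0 =ᵐ[μlim] 0 :=
    (integral_eq_zero_iff_of_nonneg (fun q => hψ0nonneg q) hψ0int).1 hint0
  have hnull : μlim K'ᶜ = 0 := by
    refine measure_mono_null (fun q hq => ?_) (ae_iff.1 hae0)
    have hpos : 0 < Metric.infDist q K' :=
      (hK'.isClosed.notMem_iff_infDist_pos hK'ne).1 hq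
    simp only [Set.mem_setOf_eq, Pi.zero_apply]
    exact ne_of_gt (lt_min one_pos hpos)
  have haeK' : ∀ᵐ q ∂μlim, q ∈ K' := by
    rw [ae_iff]
    exact measure_mono_null (fun q hq => hq) hnull
  -- integrability of the norm of the velocity
  have hintnorm : Integrable
      (fun q : EuclideanSpace ℝ (Fin n) × EuclideanSpace ℝ (Fin n) => ‖q.2‖) μlim := by
    refine (integrable_const (κ:ℝ)).mono' continuous_snd.norm.aestronglyMeasurable ?_
    filter_upwards [haeK'] with q hq
    rw [Real.norm_eq_abs, abs_norm]
    simpa [Metric.mem_closedBall, dist_zero_right] using hq.2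
  refine ⟨hprob, ⟨K', hK', hnull⟩, hintnorm, ?_⟩
  -- main part
  intro f hf hfb
  obtain ⟨C, hC⟩ := hfb
  set raw : EuclideanSpace ℝ (Fin n) × EuclideanSpace ℝ (Fin n) → ℝ :=
    fun q => (fderiv ℝ f q.1) q.2 with hrawdef
  have hfderivc : Continuous (fderiv ℝ f) := hf.continuous_fderiv one_ne_zero
  have hrawc : Continuous raw := (hfderivc.comp continuous_fst).clm_apply continuous_snd
  obtain ⟨C₂, hC₂⟩ := hK'.exists_bound_of_continuousOn hrawc.continuousOn
  set C₂' := max C₂ 0 with hC₂'def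
  have hC₂'0 : (0:ℝ) ≤ C₂' := le_max_right _ _
  have hC₂'b : ∀ q ∈ K', |raw q| ≤ C₂' := fun q hq =>
    le_trans (by simpa using hC₂ q hq) (le_max_left _ _)
  set ψ : EuclideanSpace ℝ (Fin n) × EuclideanSpace ℝ (Fin n) → ℝ :=
    fun q => max (-C₂') (min C₂' (raw q)) with hψdef
  have hψc : Continuous ψ := continuous_const.max (continuous_const.min hrawc)
  have hψb : ∀ q, |ψ q| ≤ C₂' := fun q => abs_le.2
    ⟨le_max_left _ _, max_le (by linarith) (min_le_left _ _)⟩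
  have hψeq : ∀ q ∈ K', ψ q = raw q := by
    intro q hq
    have h2 := abs_le.1 (hC₂'b q hq)
    simp only [hψdef]
    rw [min_eq_right h2.2, max_eq_right h2.1]
  -- Lipschitz bound for f ∘ γ
  obtain ⟨R, hR⟩ := hK.isBounded.subset_closedBall 0
  obtain ⟨C₁, hC₁⟩ := (isCompact_closedBall (0 : EuclideanSpace ℝ (Fin n)) R)
    |>.exists_bound_of_continuousOn hfderivc.continuousOn
  set C₁' := max C₁ 0 with hC₁'def
  have hC₁'0 : (0:ℝ) ≤ C₁' := le_max_right _ _
  set F : ℝ → ℝ := fun s => f (γ s) with hFdef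
  have hFlip : LipschitzWith (Real.toNNReal (C₁' * κ)) F := by
    apply LipschitzWith.of_dist_le_mul
    intro a b
    have h1 : ‖f (γ a) - f (γ b)‖ ≤ C₁' * ‖γ a - γ b‖ :=
      Convex.norm_image_sub_le_of_norm_fderiv_le
        (fun x _ => (hf.differentiable one_ne_zero).differentiableAt)
        (fun x hx => le_trans (hC₁ x hx) (le_max_left _ _))
        (convex_closedBall _ _) (hR (hrange b)) (hR (hrange a))
    have h2 : dist (γ a) (γ b) ≤ κ * dist a b := hγ.dist_le_mul a b
    have h3 : dist (F a) (F b) ≤ C₁' * (κ * dist a b) := by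
      rw [dist_eq_norm]
      refine h1.trans ?_
      rw [← dist_eq_norm]
      exact mul_le_mul_of_nonneg_left h2 hC₁'0
    refine h3.trans (le_of_eq ?_)
    rw [Real.coe_toNNReal _ (by positivity)]
    ring
  set g : ℝ → ℝ := fun s => (fderiv ℝ f (γ s)) (γ' s) with hgdef
  have hgd : ∀ᵐ s ∂(volume : Measure ℝ), HasDerivAt F (g s) s :=
    hderiv.mono fun s hs =>
      ((hf.differentiable one_ne_zero (γ s)).hasFDerivAt.comp_hasDerivAt s hs)
  have hψint : ∀ i, ∫ q, ψ q ∂(μt (ts i)) = (ts i)⁻¹ * (F (ts i) - F 0) := by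
    intro i
    rw [occ ψ hψc _ (hts i)]
    congr 1
    rw [show (fun s => ψ (γ s, γ' s)) = g from funext fun s => hψeq _ (hmem s)]
    exact lipschitz_ftc_s13 hFlip hgd (hts i).le
  have hC0 : (0:ℝ) ≤ C := le_trans (abs_nonneg _) (hC (γ 0))
  have hto0 : Tendsto (fun i => (ts i)⁻¹ * (F (ts i) - F 0)) atTop (𝓝 0) := by
    have hb : Tendsto (fun i => (ts i)⁻¹ * (2 * C)) atTop (𝓝 0) := by
      have := htop.inv_tendsto_atTop.mul_const (2 * C)
      simpa using this
    apply squeeze_zero_norm _ hb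
    · intro i
      rw [Real.norm_eq_abs, abs_mul, abs_of_pos (inv_pos.2 (hts i))]
      refine mul_le_mul_of_nonneg_left ?_ (inv_pos.2 (hts i)).le
      calc |F (ts i) - F 0| ≤ |F (ts i)| + |F 0| := abs_sub _ _
        _ ≤ C + C := add_le_add (hC _) (hC _)
        _ = 2 * C := by ring
  have hlimψ := hlim ψ hψc ⟨C₂', hψb⟩
  simp only [hψint] at hlimψ
  have hzero : ∫ q, ψ q ∂μlim = 0 := tendsto_nhds_unique hlimψ hto0
  rw [← hzero]
  apply integral_congr_ae
  exact haeK'.mono fun q hq => (hψeq q hq).symm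
end

section
/- Let γ_λ : (−∞,0] → M, λ > 0, be a family of equi-Lipschitz curves on a compact manifold M, and define the probability measure μ̃^λ on TM by ∫ f dμ̃^λ = λ ∫_{−∞}^0 e^{λs} f(γ_λ(s), γ_λ'(s)) ds. If μ̃ is a weak-* limit of μ̃^{λ_n} for some sequence λ_n → 0, then μ̃ is a closed measure: ∫ d_x φ(v) dμ̃(x,v) = 0 for every C¹ function φ : M → ℝ. -/
open Filter Topology MeasureTheory

open Set Real
open scoped ENNReal NNReal

lemma aux_exp_int {lam : ℝ} (hlam : 0 < lam) (c : ℝ) :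
    IntegrableOn (fun s => Real.exp (lam * s)) (Iic c) := by
  have h1 : Integrable ((Iic (lam * c)).indicator Real.exp) :=
    (integrableOn_exp_Iic _).integrable_indicator measurableSet_Iic
  have h2 := h1.comp_mul_left' (R := lam) (ne_of_gt hlam)
  refine (integrable_indicator_iff measurableSet_Iic).1 (h2.congr ?_)
  filter_upwards with s
  simp only [Set.indicator_apply, mem_Iic]
  by_cases hs : s ≤ c
  · rw [if_pos ((mul_le_mul_iff_right₀ hlam).2 hs), if_pos hs]
  · rw [if_neg (fun h => hs ((mul_le_mul_iff_right₀ hlam).1 h)), if_neg hs]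

lemma aux_exp_eval {lam : ℝ} (hlam : 0 < lam) :
    ∫ s in Iic (0:ℝ), Real.exp (lam * s) = 1 / lam := by
  have hderiv : ∀ x ∈ Iic (0:ℝ),
      HasDerivAt (fun y => Real.exp (lam * y) / lam) (Real.exp (lam * x)) x := by
    intro x _
    have h1 : HasDerivAt (fun y : ℝ => lam * y) lam x := by
      simpa using (hasDerivAt_id x).const_mul lam
    have h2 := (Real.hasDerivAt_exp (lam * x)).comp x h1
    have h3 := h2.div_const lam
    simpa [mul_div_assoc, mul_div_cancel_right₀, ne_of_gt hlam] using h3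
  have htend : Tendsto (fun y => Real.exp (lam * y) / lam) atBot (𝓝 0) := by
    have h1 : Tendsto (fun y : ℝ => lam * y) atBot atBot := by
      exact Tendsto.const_mul_atBot hlam tendsto_id
    have := (Real.tendsto_exp_atBot.comp h1).div_const lam
    simpa using this
  have := integral_Iic_of_hasDerivAt_of_tendsto' hderiv (aux_exp_int hlam 0) htend
  simpa using this

lemma aux_int_expg {lam : ℝ} (hlam : 0 < lam) {g : ℝ → ℝ} {C : ℝ}
    (hgC : ∀ s, |g s| ≤ C) (hgcont : Continuous g) (h c : ℝ) :
    IntegrableOn (fun s => Real.exp (lam * s) * g (s + h)) (Iic c) := by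
  refine Integrable.mono' ((aux_exp_int hlam c).const_mul C)
    ((Real.continuous_exp.comp (continuous_const.mul continuous_id)).mul
      (hgcont.comp (continuous_id.add continuous_const))).aestronglyMeasurable ?_
  filter_upwards with s
  rw [Real.norm_eq_abs, abs_mul, abs_of_pos (Real.exp_pos _), mul_comm C]
  exact mul_le_mul_of_nonneg_left (hgC _) (Real.exp_pos _).le

lemma keyIBP (lam : ℝ) (hlam : 0 < lam) (g G' : ℝ → ℝ) (C L : ℝ) (hC : 0 ≤ C) (hL : 0 ≤ L)
    (hgC : ∀ s, |g s| ≤ C) (hgL : ∀ a b, |g a - g b| ≤ L * |a - b|)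
    (hgcont : Continuous g)
    (hg' : ∀ᵐ s ∂(volume : Measure ℝ), s ≤ 0 → HasDerivAt g (G' s) s) :
    |∫ s in Iic (0:ℝ), lam * Real.exp (lam * s) * G' s| ≤ 2 * lam * C := by
  have hint : ∀ h : ℝ, IntegrableOn (fun s => Real.exp (lam * s) * g (s + h)) (Iic 0) :=
    fun h => aux_int_expg hlam hgC hgcont h 0
  have hint0 : IntegrableOn (fun s => Real.exp (lam * s) * g s) (Iic 0) := by
    simpa using hint 0
  set B : ℝ := ∫ s in Iic (0:ℝ), Real.exp (lam * s) * g s with hB_def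
  have hB : |B| ≤ C / lam := by
    have h1 : |B| ≤ ∫ s in Iic (0:ℝ), Real.exp (lam * s) * |g s| := by
      simpa [Real.norm_eq_abs] using
        norm_integral_le_integral_norm (μ := volume.restrict (Iic (0:ℝ)))
          (fun s => Real.exp (lam * s) * g s)
    have hi : IntegrableOn (fun s => Real.exp (lam * s) * |g s|) (Iic (0:ℝ)) :=
      hint0.abs.congr (Eventually.of_forall fun s => by
        simp only [abs_mul, abs_of_pos (Real.exp_pos (lam * s))])
    have h2 : ∫ s in Iic (0:ℝ), Real.exp (lam * s) * |g s|
        ≤ ∫ s in Iic (0:ℝ), C * Real.exp (lam * s) := by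
      refine integral_mono hi ((aux_exp_int hlam 0).const_mul C) (fun s => ?_)
      rw [mul_comm C]
      exact mul_le_mul_of_nonneg_left (hgC _) (Real.exp_pos _).le
    have h3 : ∫ s in Iic (0:ℝ), C * Real.exp (lam * s) = C / lam := by
      rw [integral_const_mul, aux_exp_eval hlam]
      field_simp
    linarith
  -- the difference quotient estimate
  have key : ∀ h : ℝ, 0 < h →
      |∫ s in Iic (0:ℝ), lam * Real.exp (lam * s) * ((g (s + h) - g s) / h)| ≤ 2 * lam * C := by
    intro h hh
    set R : ℝ := ∫ u in Ioc (0:ℝ) h, Real.exp (lam * u) * g u with hR_def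
    have hintIoc : IntegrableOn (fun u => Real.exp (lam * u) * g u) (Ioc 0 h) := by
      have := (aux_int_expg hlam hgC hgcont 0 h)
      simp only [add_zero] at this
      exact this.mono_set Ioc_subset_Iic_self
    have hintIich : IntegrableOn (fun u => Real.exp (lam * u) * g u) (Iic h) := by
      have := (aux_int_expg hlam hgC hgcont 0 h)
      simpa using this
    have e1 : ∫ s in Iic (0:ℝ), lam * Real.exp (lam * s) * ((g (s + h) - g s) / h)
        = (lam / h) * ((∫ s in Iic (0:ℝ), Real.exp (lam * s) * g (s + h)) - B) := by
      rw [hB_def, mul_sub, ← integral_const_mul, ← integral_const_mul,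
        ← integral_sub ((hint h).const_mul _) (hint0.const_mul _)]
      refine integral_congr_ae (Eventually.of_forall fun s => ?_)
      field_simp
    have e2 : (∫ s in Iic (0:ℝ), Real.exp (lam * s) * g (s + h))
        = Real.exp (-(lam * h)) * ∫ u in Iic h, Real.exp (lam * u) * g u := by
      have hind : ∀ s : ℝ, (Iic (0:ℝ)).indicator (fun s => Real.exp (lam * s) * g (s + h)) s
          = (Iic h).indicator
              (fun u => Real.exp (-(lam * h)) * (Real.exp (lam * u) * g u)) (s + h) := by
        intro s
        by_cases hs : s ≤ 0
        · rw [Set.indicator_of_mem (mem_Iic.2 hs),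
            Set.indicator_of_mem (mem_Iic.2 (by linarith : s + h ≤ h))]
          rw [← mul_assoc, ← Real.exp_add, show -(lam * h) + lam * (s + h) = lam * s by ring]
        · rw [Set.indicator_of_notMem (by simpa [mem_Iic] using hs),
            Set.indicator_of_notMem (by simp [mem_Iic]; linarith)]
      calc ∫ s in Iic (0:ℝ), Real.exp (lam * s) * g (s + h)
          = ∫ s, (Iic (0:ℝ)).indicator (fun s => Real.exp (lam * s) * g (s + h)) s :=
            (integral_indicator measurableSet_Iic).symm
        _ = ∫ s, (Iic h).indicator
              (fun u => Real.exp (-(lam * h)) * (Real.exp (lam * u) * g u)) (s + h) := by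
            simp_rw [hind]
        _ = ∫ s, (Iic h).indicator
              (fun u => Real.exp (-(lam * h)) * (Real.exp (lam * u) * g u)) s :=
            integral_add_right_eq_self _ h
        _ = ∫ u in Iic h, Real.exp (-(lam * h)) * (Real.exp (lam * u) * g u) :=
            integral_indicator measurableSet_Iic
        _ = Real.exp (-(lam * h)) * ∫ u in Iic h, Real.exp (lam * u) * g u :=
            integral_const_mul _ _
    have e3 : (∫ u in Iic h, Real.exp (lam * u) * g u) = B + R := by
      rw [hB_def, hR_def, ← setIntegral_union (Iic_disjoint_Ioc le_rfl) measurableSet_Ioc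
        hint0 hintIoc, Iic_union_Ioc_eq_Iic hh.le]
    have hR : |R| ≤ Real.exp (lam * h) * C * h := by
      have h1 : ‖R‖ ≤ Real.exp (lam * h) * C * (volume (Ioc (0:ℝ) h)).toReal := by
        refine norm_setIntegral_le_of_norm_le_const ?_ (fun u hu => ?_)
        · rw [Real.volume_Ioc]; exact ENNReal.ofReal_lt_top
        · rw [Real.norm_eq_abs, abs_mul, abs_of_pos (Real.exp_pos _)]
          have : Real.exp (lam * u) ≤ Real.exp (lam * h) :=
            Real.exp_le_exp.2 (by nlinarith [hu.2, hlam] : lam * u ≤ lam * h)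
          calc Real.exp (lam * u) * |g u| ≤ Real.exp (lam * h) * C :=
                mul_le_mul this (hgC u) (abs_nonneg _) (Real.exp_pos _).le
            _ = Real.exp (lam * h) * C := rfl
      rw [Real.volume_Ioc, sub_zero, ENNReal.toReal_ofReal hh.le] at h1
      simpa [Real.norm_eq_abs] using h1
    have hexp1 : |Real.exp (-(lam * h)) - 1| ≤ lam * h := by
      have h1 : Real.exp (-(lam * h)) ≤ 1 :=
        Real.exp_le_one_iff.2 (by nlinarith : -(lam * h) ≤ 0)
      have h2 : 1 - lam * h ≤ Real.exp (-(lam * h)) := by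
        have := Real.add_one_le_exp (-(lam * h))
        linarith
      rw [abs_sub_comm, abs_of_nonneg (by linarith)]
      linarith
    rw [e1, e2, e3]
    have expand : Real.exp (-(lam * h)) * (B + R) - B
        = (Real.exp (-(lam * h)) - 1) * B + Real.exp (-(lam * h)) * R := by ring
    rw [expand, abs_mul, abs_of_pos (div_pos hlam hh)]
    have hterm : |(Real.exp (-(lam * h)) - 1) * B + Real.exp (-(lam * h)) * R|
        ≤ lam * h * (C / lam) + Real.exp (-(lam * h)) * (Real.exp (lam * h) * C * h) := by
      refine (abs_add_le _ _).trans (add_le_add ?_ ?_)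
      · rw [abs_mul]
        exact mul_le_mul hexp1 hB (abs_nonneg _) (by nlinarith)
      · rw [abs_mul, abs_of_pos (Real.exp_pos _)]
        exact mul_le_mul_of_nonneg_left hR (Real.exp_pos _).le
    have hsimp : lam * h * (C / lam) + Real.exp (-(lam * h)) * (Real.exp (lam * h) * C * h)
        = h * C + C * h := by
      rw [show Real.exp (-(lam * h)) * (Real.exp (lam * h) * C * h)
        = (Real.exp (-(lam * h)) * Real.exp (lam * h)) * (C * h) by ring,
        ← Real.exp_add, neg_add_cancel, Real.exp_zero, one_mul]
      field_simp
    calc lam / h * |(Real.exp (-(lam * h)) - 1) * B + Real.exp (-(lam * h)) * R|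
        ≤ lam / h * (h * C + C * h) := by
          rw [hsimp] at hterm
          exact mul_le_mul_of_nonneg_left hterm (div_pos hlam hh).le
      _ = 2 * lam * C := by field_simp; ring
  -- dominated convergence
  set F : ℕ → ℝ → ℝ := fun k s =>
    lam * Real.exp (lam * s) * ((g (s + 1 / (k + 1)) - g s) / (1 / (k + 1))) with hF_def
  have hhpos : ∀ k : ℕ, (0:ℝ) < 1 / (k + 1) := fun k => by positivity
  have hlim : Tendsto (fun k => ∫ s in Iic (0:ℝ), F k s) atTop
      (𝓝 (∫ s in Iic (0:ℝ), lam * Real.exp (lam * s) * G' s)) := by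
    refine tendsto_integral_of_dominated_convergence
      (fun s => lam * Real.exp (lam * s) * L) (fun k => ?_) ?_ (fun k => ?_) ?_
    · exact ((continuous_const.mul
        (Real.continuous_exp.comp (continuous_const.mul continuous_id))).mul
        (((hgcont.comp (continuous_id.add continuous_const)).sub hgcont).div_const
        _)).aestronglyMeasurable
    · exact ((aux_exp_int hlam 0).const_mul lam).mul_const L
    · filter_upwards with s
      rw [hF_def]
      simp only
      rw [Real.norm_eq_abs, abs_mul, abs_mul, abs_of_pos hlam, abs_of_pos (Real.exp_pos _)]
      refine mul_le_mul_of_nonneg_left ?_ (by positivity)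
      rw [abs_div, abs_of_pos (hhpos _), div_le_iff₀ (hhpos _)]
      calc |g (s + 1 / (↑_ + 1)) - g s| ≤ L * |s + 1 / (↑_ + 1) - s| := hgL _ _
        _ = L * (1 / (↑_ + 1)) := by rw [add_sub_cancel_left, abs_of_pos (hhpos _)]
    · have h0 : ∀ᵐ s ∂(volume.restrict (Iic (0:ℝ))), s ≤ 0 → HasDerivAt g (G' s) s :=
        ae_restrict_of_ae hg'
      have h1 : ∀ᵐ s ∂(volume.restrict (Iic (0:ℝ))), s ∈ Iic (0:ℝ) :=
        ae_restrict_mem measurableSet_Iic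
      filter_upwards [h0, h1] with s hs hs0
      have hd := hs hs0
      rw [hasDerivAt_iff_tendsto_slope] at hd
      have hseq : Tendsto (fun k : ℕ => s + 1 / (k + 1 : ℝ)) atTop (𝓝[≠] s) := by
        refine tendsto_nhdsWithin_of_tendsto_nhds_of_eventually_within _ ?_ ?_
        · have : Tendsto (fun k : ℕ => 1 / (k + 1 : ℝ)) atTop (𝓝 0) :=
            tendsto_one_div_add_atTop_nhds_zero_nat
          simpa using tendsto_const_nhds.add this
        · filter_upwards with k
          simp only [mem_compl_iff, mem_singleton_iff]
          intro hcon
          have := hhpos k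
          nlinarith [congrArg (fun x => x - s) hcon]
      have hcomp := hd.comp hseq
      have heq : ∀ k : ℕ, slope g s (s + 1 / (k + 1 : ℝ))
          = (g (s + 1 / (k + 1 : ℝ)) - g s) / (1 / (k + 1 : ℝ)) := by
        intro k
        rw [slope_def_field, add_sub_cancel_left]
      have : Tendsto (fun k : ℕ => (g (s + 1 / (k + 1 : ℝ)) - g s) / (1 / (k + 1 : ℝ)))
          atTop (𝓝 (G' s)) := by
        refine hcomp.congr fun k => ?_
        simp only [Function.comp_apply, heq]
      simpa [hF_def] using (this.const_mul (lam * Real.exp (lam * s)))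
  have habs : Tendsto (fun k => |∫ s in Iic (0:ℝ), F k s|) atTop
      (𝓝 (|∫ s in Iic (0:ℝ), lam * Real.exp (lam * s) * G' s|)) := hlim.abs
  refine le_of_tendsto habs (Eventually.of_forall fun k => ?_)
  exact key _ (hhpos k)

/-- Any weak-* limit, along a sequence `λ_n → 0`, of the discounted occupation measures
`μ̃^λ` of an equi-Lipschitz family of curves `γ_λ : (-∞,0] → M` (with values in a compact
set) is a closed measure: it annihilates the differentials of bounded C¹ functions. -/
theorem discounted_occupation_measure_limit_is_closed {n : ℕ}
    (Γ Γ' : ℝ → ℝ → EuclideanSpace ℝ (Fin n)) (κ : NNReal)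
    (hΓ : ∀ lam : ℝ, 0 < lam → LipschitzWith κ (Γ lam))
    (hderiv : ∀ lam : ℝ, 0 < lam →
      ∀ᵐ s ∂(volume : Measure ℝ), s ≤ 0 → HasDerivAt (Γ lam) (Γ' lam s) s)
    (hmeas : ∀ lam : ℝ, 0 < lam → Measurable (Γ' lam))
    (hbound : ∀ lam : ℝ, 0 < lam → ∀ s, ‖Γ' lam s‖ ≤ κ)
    (K : Set (EuclideanSpace ℝ (Fin n))) (hK : IsCompact K)
    (hrange : ∀ lam : ℝ, 0 < lam → ∀ s, Γ lam s ∈ K)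
    (μdisc : ℝ → Measure (EuclideanSpace ℝ (Fin n) × EuclideanSpace ℝ (Fin n)))
    (hμ : ∀ lam : ℝ, 0 < lam → μdisc lam =
      Measure.map (fun s => (Γ lam s, Γ' lam s))
        (((volume : Measure ℝ).restrict (Set.Iic (0 : ℝ))).withDensity
          (fun s => ENNReal.ofReal (lam * Real.exp (lam * s)))))
    (μlim : Measure (EuclideanSpace ℝ (Fin n) × EuclideanSpace ℝ (Fin n)))
    (lams : ℕ → ℝ) (hpos : ∀ i, 0 < lams i) (hto0 : Tendsto lams atTop (𝓝 0))
    (hlim : ∀ ψ : EuclideanSpace ℝ (Fin n) × EuclideanSpace ℝ (Fin n) → ℝ,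
      Continuous ψ → (∃ Cψ : ℝ, ∀ q, |ψ q| ≤ Cψ) →
      Tendsto (fun i => ∫ q, ψ q ∂(μdisc (lams i))) atTop (𝓝 (∫ q, ψ q ∂μlim))) :
    ∀ φ : EuclideanSpace ℝ (Fin n) → ℝ, ContDiff ℝ 1 φ → (∃ C : ℝ, ∀ x, |φ x| ≤ C) →
      ∫ q : EuclideanSpace ℝ (Fin n) × EuclideanSpace ℝ (Fin n),
        (fderiv ℝ φ q.1) q.2 ∂μlim = 0 := by
  intro φ hφ hbdd
  obtain ⟨C0, hC0⟩ := hbdd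
  have hC0nn : 0 ≤ C0 := le_trans (abs_nonneg _) (hC0 0)
  set ψ : EuclideanSpace ℝ (Fin n) × EuclideanSpace ℝ (Fin n) → ℝ :=
    fun q => (fderiv ℝ φ q.1) q.2 with hψ_def
  have hψcont : Continuous ψ :=
    ((hφ.continuous_fderiv one_ne_zero).comp continuous_fst).clm_apply continuous_snd
  set Kc : Set (EuclideanSpace ℝ (Fin n) × EuclideanSpace ℝ (Fin n)) :=
    K ×ˢ Metric.closedBall (0 : EuclideanSpace ℝ (Fin n)) (κ : ℝ) with hKc_def
  have hKcc : IsCompact Kc := hK.prod (isCompact_closedBall _ _)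
  have hKcne : Kc.Nonempty :=
    ⟨(Γ (lams 0) 0, 0), Set.mem_prod.2 ⟨hrange _ (hpos 0) 0,
      Metric.mem_closedBall_self κ.coe_nonneg⟩⟩
  have hKc_closed : IsClosed Kc := hKcc.isClosed
  have hcurve_mem : ∀ lam, 0 < lam → ∀ s, (Γ lam s, Γ' lam s) ∈ Kc := fun lam hl s =>
    Set.mem_prod.2 ⟨hrange lam hl s, mem_closedBall_zero_iff.2 (hbound lam hl s)⟩
  -- cutoff function
  set χ : EuclideanSpace ℝ (Fin n) × EuclideanSpace ℝ (Fin n) → ℝ :=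
    fun q => max 0 (1 - Metric.infDist q Kc) with hχ_def
  have hχcont : Continuous χ :=
    continuous_const.max (continuous_const.sub (Metric.continuous_infDist_pt Kc))
  have hχ0 : ∀ q, 0 ≤ χ q := fun q => le_max_left _ _
  have hχ1 : ∀ q, χ q ≤ 1 := fun q =>
    max_le zero_le_one (by linarith [Metric.infDist_nonneg (x := q) (s := Kc)])
  have hχone : ∀ q ∈ Kc, χ q = 1 := fun q hq => by
    rw [hχ_def]; simp [Metric.infDist_zero_of_mem hq]
  -- bound for χ * ψ
  obtain ⟨Cψ, hCψ⟩ : ∃ Cψ, ∀ q ∈ Metric.cthickening 1 Kc, |ψ q| ≤ Cψ := by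
    obtain ⟨M, hM⟩ := ((hKcc.cthickening (r := 1)).image
      (continuous_abs.comp hψcont)).bddAbove
    exact ⟨M, fun q hq => hM ⟨q, hq, rfl⟩⟩
  have hψ'bd : ∀ q, |χ q * ψ q| ≤ max Cψ 0 := by
    intro q
    by_cases hq : Metric.infDist q Kc < 1
    · have hqin : q ∈ Metric.cthickening 1 Kc :=
        Metric.thickening_subset_cthickening _ _
          ((Metric.mem_thickening_iff_infDist_lt hKcne).2 hq)
      rw [abs_mul, abs_of_nonneg (hχ0 q)]
      calc χ q * |ψ q| ≤ 1 * max Cψ 0 :=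
            mul_le_mul (hχ1 q) (le_max_of_le_left (hCψ q hqin)) (abs_nonneg _) zero_le_one
        _ = max Cψ 0 := one_mul _
    · have hz : χ q = 0 := by
        rw [hχ_def]; simp only [max_eq_left_iff]; linarith
      rw [hz, zero_mul, abs_zero]; exact le_max_right _ _
  -- integral representation under μdisc
  have hdisc : ∀ lam, 0 < lam →
      ∀ f : EuclideanSpace ℝ (Fin n) × EuclideanSpace ℝ (Fin n) → ℝ, Continuous f →
      ∫ q, f q ∂(μdisc lam)
        = ∫ s in Set.Iic (0:ℝ), lam * Real.exp (lam * s) * f (Γ lam s, Γ' lam s) := by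
    intro lam hl f hf
    rw [hμ lam hl, integral_map
      (((hΓ lam hl).continuous.measurable.prodMk (hmeas lam hl)).aemeasurable)
      hf.aestronglyMeasurable]
    rw [show (fun s => ENNReal.ofReal (lam * Real.exp (lam * s)))
        = (fun s => ((lam * Real.exp (lam * s)).toNNReal : ℝ≥0∞)) from rfl]
    have hm : Measurable fun s : ℝ => (lam * Real.exp (lam * s)).toNNReal := by
      fun_prop
    rw [integral_withDensity_eq_integral_smul hm _]
    refine integral_congr_ae (Eventually.of_forall fun s => ?_)
    simp only [NNReal.smul_def]
    rw [Real.coe_toNNReal _ (mul_nonneg hl.le (Real.exp_pos _).le)]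
    rfl
  -- total mass 1
  have hmass : ∀ lam, 0 < lam → ∫ q, (1:ℝ) ∂(μdisc lam) = 1 := by
    intro lam hl
    rw [hdisc lam hl _ continuous_const]
    simp only [mul_one]
    rw [integral_const_mul, aux_exp_eval hl]
    field_simp
  -- μlim is a finite measure
  have h1 : (∫ q, (1:ℝ) ∂μlim) = 1 := by
    have htend := hlim (fun _ => 1) continuous_const ⟨1, fun q => by norm_num⟩
    exact tendsto_nhds_unique
      (Filter.Tendsto.congr (fun i => hmass _ (hpos i)) htend) tendsto_const_nhds
  have hfin : IsFiniteMeasure μlim := by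
    constructor
    rw [lt_top_iff_ne_top]
    intro hcon
    rw [integral_const, smul_eq_mul, mul_one, Measure.real, hcon, ENNReal.toReal_top] at h1
    norm_num at h1
  haveI := hfin
  -- μlim vanishes outside Kc
  have hout : μlim Kcᶜ = 0 := by
    set S : ℕ → Set (EuclideanSpace ℝ (Fin n) × EuclideanSpace ℝ (Fin n)) :=
      fun m => {q | 1 / (m + 1 : ℝ) ≤ Metric.infDist q Kc} with hS_def
    have hScl : ∀ m, IsClosed (S m) := fun m =>
      isClosed_le continuous_const (Metric.continuous_infDist_pt Kc)
    have hSnull : ∀ m : ℕ, μlim (S m) = 0 := by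
      intro m
      set f : EuclideanSpace ℝ (Fin n) × EuclideanSpace ℝ (Fin n) → ℝ :=
        fun q => min 1 ((m + 1 : ℝ) * Metric.infDist q Kc) with hf_def
      have hfcont : Continuous f :=
        continuous_const.min (continuous_const.mul (Metric.continuous_infDist_pt Kc))
      have hf0 : ∀ q, 0 ≤ f q := fun q =>
        le_min zero_le_one (mul_nonneg (by positivity) Metric.infDist_nonneg)
      have hf1 : ∀ q, f q ≤ 1 := fun q => min_le_left _ _
      have hfK : ∀ q ∈ Kc, f q = 0 := fun q hq => by
        rw [hf_def]; simp [Metric.infDist_zero_of_mem hq]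
      have hfdisc : ∀ i, ∫ q, f q ∂(μdisc (lams i)) = 0 := by
        intro i
        rw [hdisc _ (hpos i) f hfcont]
        rw [show (fun s => lams i * Real.exp (lams i * s)
            * f (Γ (lams i) s, Γ' (lams i) s)) = fun _ => (0:ℝ) from
          funext fun s => by rw [hfK _ (hcurve_mem _ (hpos i) s)]; ring]
        simp
      have hflim : ∫ q, f q ∂μlim = 0 := by
        have htend := hlim f hfcont ⟨1, fun q => abs_le.2 ⟨by linarith [hf0 q], hf1 q⟩⟩
        exact tendsto_nhds_unique
          (Filter.Tendsto.congr hfdisc htend) tendsto_const_nhds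
      have hind : ∀ q, Set.indicator (S m) (fun _ => (1:ℝ)) q ≤ f q := by
        intro q
        by_cases hq : q ∈ S m
        · rw [Set.indicator_of_mem hq]
          refine le_min le_rfl ?_
          have hq' : 1 / (m + 1 : ℝ) ≤ Metric.infDist q Kc := hq
          have : (m + 1 : ℝ) * (1 / (m + 1 : ℝ)) ≤ (m + 1 : ℝ) * Metric.infDist q Kc :=
            mul_le_mul_of_nonneg_left hq' (by positivity)
          rwa [mul_one_div, div_self (by positivity : (m + 1 : ℝ) ≠ 0)] at this
        · rw [Set.indicator_of_notMem hq]; exact hf0 q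
      have hintf : Integrable f μlim :=
        Integrable.mono' (integrable_const 1) hfcont.aestronglyMeasurable
          (Eventually.of_forall fun q => by
            rw [Real.norm_eq_abs, abs_of_nonneg (hf0 q)]; exact hf1 q)
      have hindint : Integrable (Set.indicator (S m) fun _ => (1:ℝ)) μlim :=
        (integrable_const 1).indicator (hScl m).measurableSet
      have h3 : (μlim (S m)).toReal ≤ 0 := by
        have := integral_mono hindint hintf hind
        rwa [integral_indicator (hScl m).measurableSet, setIntegral_const, smul_eq_mul,
          mul_one, hflim] at this
      have h4 : (μlim (S m)).toReal = 0 := le_antisymm h3 ENNReal.toReal_nonneg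
      exact (ENNReal.toReal_eq_zero_iff _).1 h4 |>.resolve_right (measure_ne_top _ _)
    have hsub : Kcᶜ ⊆ ⋃ m, S m := by
      intro q hq
      have hpos' : 0 < Metric.infDist q Kc :=
        (hKc_closed.notMem_iff_infDist_pos hKcne).1 hq
      obtain ⟨m, hm⟩ := exists_nat_one_div_lt hpos'
      exact Set.mem_iUnion.2 ⟨m, le_of_lt hm⟩
    exact measure_mono_null hsub (measure_iUnion_null hSnull)
  -- ae equality
  have hae : (fun q => χ q * ψ q) =ᵐ[μlim] ψ := by
    have h0 : ∀ᵐ q ∂μlim, q ∈ Kc := by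
      rw [ae_iff]
      refine measure_mono_null (fun q hq => ?_) hout
      simpa using hq
    filter_upwards [h0] with q hq
    rw [hχone q hq, one_mul]
  -- Lipschitz bound for φ ∘ Γ
  obtain ⟨R, hR⟩ : ∃ R, K ⊆ Metric.closedBall 0 R := hK.isBounded.subset_closedBall 0
  have hR' : K ⊆ Metric.closedBall (0 : EuclideanSpace ℝ (Fin n)) (max R 0) :=
    hR.trans (Metric.closedBall_subset_closedBall (le_max_left _ _))
  obtain ⟨Mφ, hMφ⟩ : ∃ M, ∀ x ∈ Metric.closedBall (0 : EuclideanSpace ℝ (Fin n)) (max R 0),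
      ‖fderiv ℝ φ x‖ ≤ M := by
    obtain ⟨M, hM⟩ := ((isCompact_closedBall (0 : EuclideanSpace ℝ (Fin n)) (max R 0)).image
      ((hφ.continuous_fderiv one_ne_zero).norm)).bddAbove
    exact ⟨M, fun x hx => hM ⟨x, hx, rfl⟩⟩
  have hMφnn : 0 ≤ Mφ :=
    le_trans (norm_nonneg _) (hMφ 0 (Metric.mem_closedBall_self (le_max_right _ _)))
  set L : ℝ := Mφ * κ with hL_def
  have hLnn : 0 ≤ L := mul_nonneg hMφnn κ.coe_nonneg
  have hgLip : ∀ lam, 0 < lam → ∀ a b : ℝ, |φ (Γ lam a) - φ (Γ lam b)| ≤ L * |a - b| := by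
    intro lam hl a b
    have h1 : ‖φ (Γ lam a) - φ (Γ lam b)‖ ≤ Mφ * ‖Γ lam a - Γ lam b‖ :=
      Convex.norm_image_sub_le_of_norm_fderiv_le
        (fun x _ => (hφ.differentiable one_ne_zero).differentiableAt)
        (fun x hx => hMφ x hx) (convex_closedBall _ _)
        (hR' (hrange lam hl b)) (hR' (hrange lam hl a))
    have h2 : ‖Γ lam a - Γ lam b‖ ≤ (κ : ℝ) * |a - b| := by
      have := (hΓ lam hl).dist_le_mul a b
      simpa [dist_eq_norm, Real.dist_eq] using this
    calc |φ (Γ lam a) - φ (Γ lam b)| ≤ Mφ * ((κ : ℝ) * |a - b|) :=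
          le_trans h1 (mul_le_mul_of_nonneg_left h2 hMφnn)
      _ = L * |a - b| := by rw [hL_def]; ring
  -- per-index bound
  have hbd_i : ∀ i, |∫ q, χ q * ψ q ∂(μdisc (lams i))| ≤ 2 * lams i * C0 := by
    intro i
    have hl := hpos i
    rw [hdisc (lams i) hl (fun q => χ q * ψ q) (hχcont.mul hψcont)]
    have hg' : ∀ᵐ s ∂(volume : Measure ℝ), s ≤ 0 →
        HasDerivAt (fun s => φ (Γ (lams i) s))
          ((fderiv ℝ φ (Γ (lams i) s)) (Γ' (lams i) s)) s := by
      filter_upwards [hderiv (lams i) hl] with s hs hs0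
      exact ((hφ.differentiable one_ne_zero (Γ (lams i) s)).hasFDerivAt).comp_hasDerivAt s (hs hs0)
    have hkey := keyIBP (lams i) hl (fun s => φ (Γ (lams i) s))
      (fun s => (fderiv ℝ φ (Γ (lams i) s)) (Γ' (lams i) s)) C0 L hC0nn hLnn
      (fun s => hC0 _) (hgLip (lams i) hl)
      (hφ.continuous.comp (hΓ (lams i) hl).continuous) hg'
    refine le_trans (le_of_eq (congrArg abs
      (integral_congr_ae (Eventually.of_forall fun s => ?_)))) hkey
    simp only
    rw [hχone _ (hcurve_mem _ hl s), one_mul]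
  -- conclusion
  have hlimψ' := hlim (fun q => χ q * ψ q) (hχcont.mul hψcont) ⟨max Cψ 0, hψ'bd⟩
  have hzero : Tendsto (fun i => ∫ q, χ q * ψ q ∂(μdisc (lams i))) atTop (𝓝 0) := by
    refine squeeze_zero_norm (fun i => by
      simpa [Real.norm_eq_abs] using hbd_i i) ?_
    have : Tendsto (fun i => 2 * lams i * C0) atTop (𝓝 (2 * 0 * C0)) :=
      (hto0.const_mul 2).mul_const C0
    simpa using this
  have hfinal : ∫ q, χ q * ψ q ∂μlim = 0 := tendsto_nhds_unique hlimψ' hzero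
  calc ∫ q, ψ q ∂μlim = ∫ q, χ q * ψ q ∂μlim := (integral_congr_ae hae).symm
    _ = 0 := hfinal
end
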